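/- Let X be a finite set, let p and q be probability mass functions on X, and let v : X → ℝ satisfy 0 ≤ v(x) ≤ 1 for all x ∈ X. Then |E_p[v] − E_q[v]| ≤ 4·√(Var_p(v) · D_△(p‖q)) + 5·D_△(p‖q). -/

import Mathlib

open Finset

/-- `p` is a probability mass function on the finite set `X`. -/
def IsPMF {X : Type*} [Fintype X] (p : X → ℝ) : Prop :=
  (∀ x, 0 ≤ p x) ∧ ∑ x, p x = 1

/-- Expectation of `v` under `p`. -/
noncomputable def expect {X : Type*} [Fintype X] (p v : X → ℝ) : ℝ := ∑ x, p x * v x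

/-- Variance of `v` under `p`. -/
noncomputable def pmfVar {X : Type*} [Fintype X] (p v : X → ℝ) : ℝ :=
  ∑ x, p x * (v x - expect p v) ^ 2

/-- Triangular discrimination `D_△(p‖q)` (terms with `p x + q x = 0` count as `0`,
which is automatic since `0 / 0 = 0` in Lean). -/
noncomputable def triDisc {X : Type*} [Fintype X] (p q : X → ℝ) : ℝ :=
  ∑ x, (p x - q x) ^ 2 / (p x + q x)

set_option maxHeartbeats 1000000 in
/-- For pmfs `p, q` on a finite set `X` and `v : X → [0,1]`,
`|E_p[v] − E_q[v]| ≤ 4·√(Var_p(v)·D_△(p‖q)) + 5·D_△(p‖q)`. -/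
theorem mean_diff_le_triDisc {X : Type*} [Fintype X] (p q v : X → ℝ)
    (hp : IsPMF p) (hq : IsPMF q) (hv : ∀ x, 0 ≤ v x ∧ v x ≤ 1) :
    |expect p v - expect q v| ≤
      4 * Real.sqrt (pmfVar p v * triDisc p q) + 5 * triDisc p q := by
  obtain ⟨hp0, hp1⟩ := hp
  obtain ⟨hq0, hq1⟩ := hq
  set μ := expect p v with hμdef
  set D := triDisc p q with hDdef
  set V := pmfVar p v with hVdef
  have hpq0 : ∀ x, 0 ≤ p x + q x := fun x => add_nonneg (hp0 x) (hq0 x)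
  have hD0 : 0 ≤ D := Finset.sum_nonneg fun x _ => div_nonneg (sq_nonneg _) (hpq0 x)
  have hV0 : 0 ≤ V := Finset.sum_nonneg fun x _ => mul_nonneg (hp0 x) (sq_nonneg _)
  have hμ0 : 0 ≤ μ := Finset.sum_nonneg fun x _ => mul_nonneg (hp0 x) (hv x).1
  have hμ1 : μ ≤ 1 := by
    have : μ ≤ ∑ x, p x := Finset.sum_le_sum fun x _ => by
      nlinarith [(hv x).2, hp0 x]
    linarith [hp1 ▸ this]
  have hvm : ∀ x, (v x - μ) ^ 2 ≤ 1 := fun x => by nlinarith [(hv x).1, (hv x).2]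
  set f : X → ℝ := fun x => (p x - q x) / Real.sqrt (p x + q x) with hf
  set g : X → ℝ := fun x => Real.sqrt (p x + q x) * (v x - μ) with hg
  set g2 : X → ℝ := fun x => Real.sqrt (p x + q x) * (v x - μ) ^ 2 with hg2
  set S : ℝ := ∑ x, (p x + q x) * (v x - μ) ^ 2 with hSdef
  have hS0 : 0 ≤ S := Finset.sum_nonneg fun x _ => mul_nonneg (hpq0 x) (sq_nonneg _)
  have hfsq : ∀ x, f x ^ 2 = (p x - q x) ^ 2 / (p x + q x) := fun x => by
    rw [hf, div_pow, Real.sq_sqrt (hpq0 x)]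
  have hgsq : ∀ x, g x ^ 2 = (p x + q x) * (v x - μ) ^ 2 := fun x => by
    rw [hg, mul_pow, Real.sq_sqrt (hpq0 x)]
  have hg2sq : ∀ x, g2 x ^ 2 = (p x + q x) * ((v x - μ) ^ 2) ^ 2 := fun x => by
    rw [hg2, mul_pow, Real.sq_sqrt (hpq0 x)]
  have hcase : ∀ x, (p x + q x = 0 → p x - q x = 0) ∧
      (p x + q x ≠ 0 → Real.sqrt (p x + q x) ≠ 0) := fun x =>
    ⟨fun h => by nlinarith [hp0 x, hq0 x],
     fun h => Real.sqrt_ne_zero'.2 (lt_of_le_of_ne (hpq0 x) (Ne.symm h))⟩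
  have hfg : ∀ x, f x * g x = (p x - q x) * (v x - μ) := fun x => by
    by_cases h : p x + q x = 0
    · simp [hf, hg, (hcase x).1 h]
    · simp only [hf, hg]
      field_simp [(hcase x).2 h]
  have hfg2 : ∀ x, f x * g2 x = (p x - q x) * (v x - μ) ^ 2 := fun x => by
    by_cases h : p x + q x = 0
    · simp [hf, hg2, (hcase x).1 h]
    · simp only [hf, hg2]
      field_simp [(hcase x).2 h]
  -- rewrite mean difference
  have key : expect p v - expect q v = ∑ x, (p x - q x) * (v x - μ) := by
    have h1 : ∀ x ∈ Finset.univ, (p x - q x) * (v x - μ)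
        = (p x * v x - q x * v x) - (p x * μ - q x * μ) := fun x _ => by ring
    rw [Finset.sum_congr rfl h1, Finset.sum_sub_distrib, Finset.sum_sub_distrib,
      Finset.sum_sub_distrib, ← Finset.sum_mul, ← Finset.sum_mul, hp1, hq1]
    simp [_root_.expect]
  -- Cauchy-Schwarz 1
  have CS1 : (expect p v - expect q v) ^ 2 ≤ D * S := by
    have h := Finset.sum_mul_sq_le_sq_mul_sq Finset.univ f g
    rw [Finset.sum_congr rfl fun x _ => hfg x, Finset.sum_congr rfl fun x _ => hfsq x,
      Finset.sum_congr rfl fun x _ => hgsq x] at h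
    rw [key]
    exact h
  -- Cauchy-Schwarz 2
  have CS2 : (∑ x, (p x - q x) * (v x - μ) ^ 2) ^ 2 ≤ D * S := by
    have h := Finset.sum_mul_sq_le_sq_mul_sq Finset.univ f g2
    rw [Finset.sum_congr rfl fun x _ => hfg2 x, Finset.sum_congr rfl fun x _ => hfsq x,
      Finset.sum_congr rfl fun x _ => hg2sq x] at h
    refine h.trans (mul_le_mul_of_nonneg_left ?_ hD0)
    exact Finset.sum_le_sum fun x _ => by
      nlinarith [mul_nonneg (mul_nonneg (hpq0 x) (sq_nonneg (v x - μ)))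
        (sub_nonneg.2 (hvm x))]
  set T : ℝ := ∑ x, (q x - p x) * (v x - μ) ^ 2 with hTdef
  have hST : S = 2 * V + T := by
    rw [hSdef, hTdef, hVdef, pmfVar, ← hμdef]
    rw [Finset.mul_sum, ← Finset.sum_add_distrib]
    exact Finset.sum_congr rfl fun x _ => by ring
  have hT2 : T ^ 2 ≤ D * S := by
    have : T = -(∑ x, (p x - q x) * (v x - μ) ^ 2) := by
      rw [hTdef, ← Finset.sum_neg_distrib]
      exact Finset.sum_congr rfl fun x _ => by ring
    rw [this]
    simpa using CS2
  have hTle : T ≤ Real.sqrt (D * S) := by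
    calc T ≤ |T| := le_abs_self T
    _ = Real.sqrt (T ^ 2) := (Real.sqrt_sq_eq_abs T).symm
    _ ≤ Real.sqrt (D * S) := Real.sqrt_le_sqrt hT2
  have hDS : Real.sqrt (D * S) = Real.sqrt D * Real.sqrt S := Real.sqrt_mul hD0 S
  set s := Real.sqrt S with hs
  set d := Real.sqrt D with hd
  have hs0 : 0 ≤ s := Real.sqrt_nonneg S
  have hd0 : 0 ≤ d := Real.sqrt_nonneg D
  have hssq : s ^ 2 = S := Real.sq_sqrt hS0
  have hdsq : d ^ 2 = D := Real.sq_sqrt hD0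
  set w := Real.sqrt (2 * V) with hw
  have hw0 : 0 ≤ w := Real.sqrt_nonneg _
  have hwsq : w ^ 2 = 2 * V := Real.sq_sqrt (by linarith)
  have hSle : s ^ 2 ≤ w ^ 2 + d * s := by
    rw [hssq, hwsq]
    calc S = 2 * V + T := hST
    _ ≤ 2 * V + Real.sqrt (D * S) := by linarith
    _ = 2 * V + d * s := by rw [hDS]
  have hsle : s ≤ d + w := by nlinarith [hSle, hs0, hd0, hw0]
  have hmain : |expect p v - expect q v| ≤ d * s := by
    have h1 : |expect p v - expect q v| = Real.sqrt ((expect p v - expect q v) ^ 2) :=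
      (Real.sqrt_sq_eq_abs _).symm
    rw [h1, ← hDS]
    exact Real.sqrt_le_sqrt CS1
  have hdw : d * w ≤ 2 * Real.sqrt (V * D) := by
    have h1 : d * w = Real.sqrt (D * (2 * V)) := (Real.sqrt_mul hD0 _).symm
    have h4 : Real.sqrt 4 = 2 := by
      rw [show (4 : ℝ) = 2 ^ 2 by norm_num, Real.sqrt_sq (by norm_num : (0:ℝ) ≤ 2)]
    have h2 : (2 : ℝ) * Real.sqrt (V * D) = Real.sqrt (4 * (V * D)) := by
      rw [Real.sqrt_mul (by norm_num : (0:ℝ) ≤ 4), h4]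
    rw [h1, h2]
    exact Real.sqrt_le_sqrt (by nlinarith)
  have hVD0 : 0 ≤ Real.sqrt (V * D) := Real.sqrt_nonneg _
  calc |expect p v - expect q v| ≤ d * s := hmain
  _ ≤ d * (d + w) := mul_le_mul_of_nonneg_left hsle hd0
  _ = D + d * w := by rw [← hdsq]; ring
  _ ≤ D + 2 * Real.sqrt (V * D) := by linarith
  _ ≤ 4 * Real.sqrt (V * D) + 5 * D := by linarith
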